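/- Let p < 0 and q ∈ ℝ. Any two 4×4 real skew-symmetric matrices A, B with Pf(A) = Pf(B) = p and s(A) = s(B) = q are symplectically congruent: there exists P with Pᵀ J P = J and Pᵀ A P = B. -/

import Mathlib

open Matrix

/-- The standard 4×4 symplectic matrix. -/
def J4 : Matrix (Fin 4) (Fin 4) ℝ :=
  !![0, 1, 0, 0; -1, 0, 0, 0; 0, 0, 0, 1; 0, 0, -1, 0]

/-- Pfaffian of a 4×4 skew-symmetric matrix: `af - be + cd`. -/
def pf4 (A : Matrix (Fin 4) (Fin 4) ℝ) : ℝ :=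
  A 0 1 * A 2 3 - A 0 2 * A 1 3 + A 0 3 * A 1 2

/-- Sum function of a 4×4 skew-symmetric matrix: `a + f`. -/
def s4 (A : Matrix (Fin 4) (Fin 4) ℝ) : ℝ :=
  A 0 1 + A 2 3

lemma J4T : J4ᵀ = -J4 := by
  ext i j; fin_cases i <;> fin_cases j <;> simp [J4, Matrix.vecHead, Matrix.vecTail]

lemma J4J4 : J4 * J4 = -1 := by
  ext i j; fin_cases i <;> fin_cases j <;>
    simp [J4, Matrix.mul_apply, Fin.sum_univ_four, Matrix.one_apply, Matrix.vecHead, Matrix.vecTail]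

lemma detJ4 : J4.det = 1 := by
  rw [Matrix.det_succ_row_zero]; simp [J4, Fin.sum_univ_succ, Matrix.det_succ_row_zero, Fin.succAbove]

lemma dot_shift (M : Matrix (Fin 4) (Fin 4) ℝ) (x z : Fin 4 → ℝ) :
    (M *ᵥ x) ⬝ᵥ z = x ⬝ᵥ (Mᵀ *ᵥ z) := by
  rw [dotProduct_comm, Matrix.dotProduct_mulVec, Matrix.mulVec_transpose, dotProduct_comm]

lemma omega_skew (x y : Fin 4 → ℝ) : x ⬝ᵥ (J4 *ᵥ y) = -(y ⬝ᵥ (J4 *ᵥ x)) := by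
  rw [dotProduct_comm, dot_shift, J4T, Matrix.neg_mulVec, dotProduct_neg]

lemma omega_adj (M : Matrix (Fin 4) (Fin 4) ℝ) (hM : Mᵀ * J4 = J4 * M)
    (x y : Fin 4 → ℝ) : (M *ᵥ x) ⬝ᵥ (J4 *ᵥ y) = x ⬝ᵥ (J4 *ᵥ (M *ᵥ y)) := by
  rw [dot_shift, Matrix.mulVec_mulVec, hM, ← Matrix.mulVec_mulVec]

lemma oself (x : Fin 4 → ℝ) : x ⬝ᵥ (J4 *ᵥ x) = 0 := by
  have := omega_skew x x; linarith

lemma quadT (a b c d e f : ℝ) :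
    (-(J4 * !![0,a,b,c;-a,0,d,e;-b,-d,0,f;-c,-e,-f,0])) *
      (-(J4 * !![0,a,b,c;-a,0,d,e;-b,-d,0,f;-c,-e,-f,0]))
    = (a+f) • (-(J4 * !![0,a,b,c;-a,0,d,e;-b,-d,0,f;-c,-e,-f,0]))
      - (a*f - b*e + c*d) • (1 : Matrix (Fin 4) (Fin 4) ℝ) := by
  ext i j; fin_cases i <;> fin_cases j <;>
    simp [J4, Matrix.mul_apply, Fin.sum_univ_four, Matrix.one_apply,
      Matrix.vecHead, Matrix.vecTail] <;> ring

lemma traceT (a b c d e f : ℝ) :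
    (-(J4 * !![0,a,b,c;-a,0,d,e;-b,-d,0,f;-c,-e,-f,0])).trace = 2*(a+f) := by
  simp [Matrix.trace, J4, Matrix.mul_apply, Fin.sum_univ_four, Matrix.diag,
    Matrix.vecHead, Matrix.vecTail]; ring

/-- Construction of a normalized eigen-pair for the eigenvalue `l`. -/
lemma eigenpair (T : Matrix (Fin 4) (Fin 4) ℝ) (l m : ℝ) (hlm : l ≠ m)
    (hTJ : Tᵀ * J4 = J4 * T)
    (hT2 : T * T = (l+m) • T - (l*m) • (1 : Matrix (Fin 4) (Fin 4) ℝ))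
    (htr : T.trace = 2*(l+m)) :
    ∃ u v : Fin 4 → ℝ, T *ᵥ u = l • u ∧ T *ᵥ v = l • v ∧ u ⬝ᵥ (J4 *ᵥ v) = 1 := by
  set E : Matrix (Fin 4) (Fin 4) ℝ := T - m • 1 with hE
  have hsub : l - m ≠ 0 := sub_ne_zero.mpr hlm
  have hTE : T * E = l • E := by
    simp only [hE, Matrix.mul_sub, mul_smul_comm, Matrix.mul_one, hT2, smul_sub, smul_smul]
    module
  have hE2 : E * E = (l - m) • E := by
    simp only [hE, Matrix.mul_sub, Matrix.sub_mul, mul_smul_comm, smul_mul_assoc,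
      Matrix.mul_one, Matrix.one_mul, hT2, smul_sub, smul_smul]
    module
  have htrE : E.trace = 2*(l-m) := by
    simp [hE, Matrix.trace_sub, Matrix.trace_smul, htr]; ring
  have hEne : E ≠ 0 := by
    intro h; rw [h] at htrE; simp at htrE
    exact hsub (by linarith)
  obtain ⟨i, j, hij⟩ : ∃ i j, E i j ≠ 0 := by
    by_contra h; push_neg at h
    exact hEne (by ext i j; simpa using h i j)
  set u : Fin 4 → ℝ := fun k => E k j with hu
  have hcol : ∀ (M : Matrix (Fin 4) (Fin 4) ℝ), M *ᵥ u = fun k => (M * E) k j := by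
    intro M; funext k
    simp [hu, Matrix.mulVec, dotProduct, Matrix.mul_apply]
  have hTu : T *ᵥ u = l • u := by
    rw [hcol, hTE]; funext k; simp [hu]
  have hEu : E *ᵥ u = (l - m) • u := by
    rw [hcol, hE2]; funext k; simp [hu]
  have hEJ : Eᵀ * J4 = J4 * E := by
    simp only [hE, Matrix.transpose_sub, Matrix.transpose_smul, Matrix.transpose_one,
      Matrix.sub_mul, Matrix.mul_sub, smul_mul_assoc, mul_smul_comm,
      Matrix.one_mul, Matrix.mul_one, hTJ]
  have hn : (0:ℝ) < u ⬝ᵥ u := by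
    have h1 : 0 < u i * u i := mul_self_pos.mpr hij
    have h2 : u i * u i ≤ ∑ k, u k * u k :=
      Finset.single_le_sum (f := fun k => u k * u k)
        (fun k _ => mul_self_nonneg (u k)) (Finset.mem_univ i)
    have h3 : u ⬝ᵥ u = ∑ k, u k * u k := rfl
    linarith
  set w : Fin 4 → ℝ := -(J4 *ᵥ u) with hw
  set cf : ℝ := ((l - m) * (u ⬝ᵥ u))⁻¹ with hcf
  refine ⟨u, cf • (E *ᵥ w), hTu, ?_, ?_⟩
  · rw [Matrix.mulVec_smul, Matrix.mulVec_mulVec, hTE, Matrix.smul_mulVec,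
      smul_comm]
  · have h1 : u ⬝ᵥ (J4 *ᵥ (E *ᵥ w)) = (l - m) * (u ⬝ᵥ (J4 *ᵥ w)) := by
      rw [← omega_adj E hEJ u w, hEu, smul_dotProduct, smul_eq_mul]
    have h2 : u ⬝ᵥ (J4 *ᵥ w) = u ⬝ᵥ u := by
      rw [hw, Matrix.mulVec_neg, Matrix.mulVec_mulVec, J4J4, Matrix.neg_mulVec,
        Matrix.one_mulVec, neg_neg]
    rw [Matrix.mulVec_smul, dotProduct_smul, h1, h2, smul_eq_mul, hcf]
    field_simp

lemma normal_form (l m : ℝ) (hlm : l ≠ m) (A : Matrix (Fin 4) (Fin 4) ℝ)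
    (hA : Aᵀ = -A) (hpf : pf4 A = l*m) (hs : s4 A = l+m) :
    ∃ Q : Matrix (Fin 4) (Fin 4) ℝ, Qᵀ * J4 * Q = J4 ∧
      Qᵀ * A * Q = !![0,l,0,0;-l,0,0,0;0,0,0,m;0,0,-m,0] := by
  have hskew : ∀ i j, A i j = -A j i := fun i j => by
    simpa using congrFun (congrFun hA j) i
  have hAe : A = !![0, A 0 1, A 0 2, A 0 3; -(A 0 1), 0, A 1 2, A 1 3;
      -(A 0 2), -(A 1 2), 0, A 2 3; -(A 0 3), -(A 1 3), -(A 2 3), 0] := by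
    ext i j
    fin_cases i <;> fin_cases j <;>
      simp [Matrix.vecHead, Matrix.vecTail] <;>
      linarith [hskew 0 0, hskew 1 1, hskew 2 2, hskew 3 3, hskew 1 0,
        hskew 2 0, hskew 3 0, hskew 2 1, hskew 3 1, hskew 3 2]
  set T : Matrix (Fin 4) (Fin 4) ℝ := -(J4 * A) with hT
  have hpf' : A 0 1 * A 2 3 - A 0 2 * A 1 3 + A 0 3 * A 1 2 = l*m := hpf
  have hs' : A 0 1 + A 2 3 = l + m := hs
  have hT2 : T * T = (l+m) • T - (l*m) • (1 : Matrix (Fin 4) (Fin 4) ℝ) := by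
    have h := quadT (A 0 1) (A 0 2) (A 0 3) (A 1 2) (A 1 3) (A 2 3)
    rw [← hAe, hpf', hs'] at h
    exact h
  have htr : T.trace = 2*(l+m) := by
    have h := traceT (A 0 1) (A 0 2) (A 0 3) (A 1 2) (A 1 3) (A 2 3)
    rw [← hAe, hs'] at h
    exact h
  have hTt : Tᵀ = -(A * J4) := by
    rw [hT, Matrix.transpose_neg, Matrix.transpose_mul, hA, J4T]
    simp
  have hTJ : Tᵀ * J4 = J4 * T := by
    rw [hTt, hT]
    rw [Matrix.neg_mul, Matrix.mul_assoc, J4J4, Matrix.mul_neg, Matrix.mul_neg,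
      ← Matrix.mul_assoc, J4J4]
    simp
  have hAJT : A = J4 * T := by
    rw [hT, Matrix.mul_neg, ← Matrix.mul_assoc, J4J4]
    simp
  -- eigenpairs
  obtain ⟨u₁, v₁, hu1, hv1, o12⟩ := eigenpair T l m hlm hTJ hT2 htr
  obtain ⟨u₂, v₂, hu2, hv2, o34⟩ := by
    refine eigenpair T m l (Ne.symm hlm) hTJ ?_ ?_
    · rw [hT2]; ring_nf
    · rw [htr]; ring
  -- cross orthogonality
  have hcross : ∀ x y : Fin 4 → ℝ, T *ᵥ x = l • x → T *ᵥ y = m • y →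
      x ⬝ᵥ (J4 *ᵥ y) = 0 := by
    intro x y hx hy
    have h1 := omega_adj T hTJ x y
    rw [hx, hy, smul_dotProduct, Matrix.mulVec_smul, dotProduct_smul,
      smul_eq_mul, smul_eq_mul] at h1
    have h2 : (l - m) * (x ⬝ᵥ (J4 *ᵥ y)) = 0 := by linarith
    rcases mul_eq_zero.mp h2 with h | h
    · exact absurd (by linarith : l = m) hlm
    · exact h
  have o13 : u₁ ⬝ᵥ (J4 *ᵥ u₂) = 0 := hcross _ _ hu1 hu2
  have o14 : u₁ ⬝ᵥ (J4 *ᵥ v₂) = 0 := hcross _ _ hu1 hv2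
  have o23 : v₁ ⬝ᵥ (J4 *ᵥ u₂) = 0 := hcross _ _ hv1 hu2
  have o24 : v₁ ⬝ᵥ (J4 *ᵥ v₂) = 0 := hcross _ _ hv1 hv2
  have o21 : v₁ ⬝ᵥ (J4 *ᵥ u₁) = -1 := by rw [omega_skew, o12]
  have o43 : v₂ ⬝ᵥ (J4 *ᵥ u₂) = -1 := by rw [omega_skew, o34]
  have o31 : u₂ ⬝ᵥ (J4 *ᵥ u₁) = 0 := by rw [omega_skew, o13]; ring
  have o41 : v₂ ⬝ᵥ (J4 *ᵥ u₁) = 0 := by rw [omega_skew, o14]; ring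
  have o32 : u₂ ⬝ᵥ (J4 *ᵥ v₁) = 0 := by rw [omega_skew, o23]; ring
  have o42 : v₂ ⬝ᵥ (J4 *ᵥ v₁) = 0 := by rw [omega_skew, o24]; ring
  have o11 : u₁ ⬝ᵥ (J4 *ᵥ u₁) = 0 := oself u₁
  have o22 : v₁ ⬝ᵥ (J4 *ᵥ v₁) = 0 := oself v₁
  have o33 : u₂ ⬝ᵥ (J4 *ᵥ u₂) = 0 := oself u₂
  have o44 : v₂ ⬝ᵥ (J4 *ᵥ v₂) = 0 := oself v₂
  -- assemble Q
  set c : Fin 4 → (Fin 4 → ℝ) := ![u₁, v₁, u₂, v₂] with hc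
  set Q : Matrix (Fin 4) (Fin 4) ℝ := Matrix.of (fun i j => c j i) with hQ
  have hent : ∀ (M : Matrix (Fin 4) (Fin 4) ℝ) (i j : Fin 4),
      (Qᵀ * M * Q) i j = (c i) ⬝ᵥ (M *ᵥ (c j)) := by
    intro M i j
    simp [hQ, Matrix.mul_apply, Matrix.mulVec, dotProduct, Fin.sum_univ_four,
      Matrix.transpose_apply]
    ring
  refine ⟨Q, ?_, ?_⟩
  · ext i j
    rw [hent]
    fin_cases i <;> fin_cases j
    · exact o11
    · exact o12
    · exact o13
    · exact o14
    · exact o21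
    · exact o22
    · exact o23
    · exact o24
    · exact o31
    · exact o32
    · exact o33
    · exact o34
    · exact o41
    · exact o42
    · exact o43
    · exact o44
  · ext i j
    rw [hent, hAJT, ← Matrix.mulVec_mulVec]
    fin_cases i <;> fin_cases j
    · show u₁ ⬝ᵥ J4 *ᵥ (T *ᵥ u₁) = 0
      rw [hu1, Matrix.mulVec_smul, dotProduct_smul, o11]; simp
    · show u₁ ⬝ᵥ J4 *ᵥ (T *ᵥ v₁) = l
      rw [hv1, Matrix.mulVec_smul, dotProduct_smul, o12]; simp
    · show u₁ ⬝ᵥ J4 *ᵥ (T *ᵥ u₂) = 0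
      rw [hu2, Matrix.mulVec_smul, dotProduct_smul, o13]; simp
    · show u₁ ⬝ᵥ J4 *ᵥ (T *ᵥ v₂) = 0
      rw [hv2, Matrix.mulVec_smul, dotProduct_smul, o14]; simp
    · show v₁ ⬝ᵥ J4 *ᵥ (T *ᵥ u₁) = -l
      rw [hu1, Matrix.mulVec_smul, dotProduct_smul, o21]; simp
    · show v₁ ⬝ᵥ J4 *ᵥ (T *ᵥ v₁) = 0
      rw [hv1, Matrix.mulVec_smul, dotProduct_smul, o22]; simp
    · show v₁ ⬝ᵥ J4 *ᵥ (T *ᵥ u₂) = 0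
      rw [hu2, Matrix.mulVec_smul, dotProduct_smul, o23]; simp
    · show v₁ ⬝ᵥ J4 *ᵥ (T *ᵥ v₂) = 0
      rw [hv2, Matrix.mulVec_smul, dotProduct_smul, o24]; simp
    · show u₂ ⬝ᵥ J4 *ᵥ (T *ᵥ u₁) = 0
      rw [hu1, Matrix.mulVec_smul, dotProduct_smul, o31]; simp
    · show u₂ ⬝ᵥ J4 *ᵥ (T *ᵥ v₁) = 0
      rw [hv1, Matrix.mulVec_smul, dotProduct_smul, o32]; simp
    · show u₂ ⬝ᵥ J4 *ᵥ (T *ᵥ u₂) = 0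
      rw [hu2, Matrix.mulVec_smul, dotProduct_smul, o33]; simp
    · show u₂ ⬝ᵥ J4 *ᵥ (T *ᵥ v₂) = m
      rw [hv2, Matrix.mulVec_smul, dotProduct_smul, o34]; simp
    · show v₂ ⬝ᵥ J4 *ᵥ (T *ᵥ u₁) = 0
      rw [hu1, Matrix.mulVec_smul, dotProduct_smul, o41]; simp
    · show v₂ ⬝ᵥ J4 *ᵥ (T *ᵥ v₁) = 0
      rw [hv1, Matrix.mulVec_smul, dotProduct_smul, o42]; simp
    · show v₂ ⬝ᵥ J4 *ᵥ (T *ᵥ u₂) = -m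
      rw [hu2, Matrix.mulVec_smul, dotProduct_smul, o43]; simp
    · show v₂ ⬝ᵥ J4 *ᵥ (T *ᵥ v₂) = 0
      rw [hv2, Matrix.mulVec_smul, dotProduct_smul, o44]; simp

theorem orbit_classification_neg (p q : ℝ) (hp : p < 0)
    (A B : Matrix (Fin 4) (Fin 4) ℝ)
    (hA : Aᵀ = -A) (hB : Bᵀ = -B)
    (hApf : pf4 A = p) (hBpf : pf4 B = p)
    (hAs : s4 A = q) (hBs : s4 B = q) :
    ∃ P : Matrix (Fin 4) (Fin 4) ℝ, Pᵀ * J4 * P = J4 ∧ Pᵀ * A * P = B := by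
  set s : ℝ := Real.sqrt (q^2 - 4*p) with hsdef
  have hd : 0 < q^2 - 4*p := by nlinarith [sq_nonneg q]
  have hs0 : 0 < s := Real.sqrt_pos.mpr hd
  have hsq : s^2 = q^2 - 4*p := Real.sq_sqrt hd.le
  set l : ℝ := (q - s)/2 with hl
  set m : ℝ := (q + s)/2 with hm
  have hlm : l ≠ m := by
    intro h
    rw [hl, hm] at h
    nlinarith
  have hprod : l*m = p := by
    have : l*m = (q^2 - s^2)/4 := by rw [hl, hm]; ring
    rw [this, hsq]; ring
  have hsum : l+m = q := by rw [hl, hm]; ring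
  obtain ⟨QA, hQAJ, hQAD⟩ := normal_form l m hlm A hA (by rw [hApf, hprod])
    (by rw [hAs, hsum])
  obtain ⟨QB, hQBJ, hQBD⟩ := normal_form l m hlm B hB (by rw [hBpf, hprod])
    (by rw [hBs, hsum])
  have hdet : QB.det * QB.det = 1 := by
    have h := congrArg Matrix.det hQBJ
    rw [Matrix.det_mul, Matrix.det_mul, Matrix.det_transpose, detJ4] at h
    linarith
  have hu : IsUnit QB.det := isUnit_iff_ne_zero.mpr (by intro h; rw [h] at hdet; linarith)
  have hinv1 : QB * QB⁻¹ = 1 := Matrix.mul_nonsing_inv _ hu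
  refine ⟨QA * QB⁻¹, ?_, ?_⟩
  · calc (QA * QB⁻¹)ᵀ * J4 * (QA * QB⁻¹)
        = QB⁻¹ᵀ * (QAᵀ * J4 * QA) * QB⁻¹ := by
          rw [Matrix.transpose_mul]; simp only [Matrix.mul_assoc]
      _ = QB⁻¹ᵀ * (QBᵀ * J4 * QB) * QB⁻¹ := by rw [hQAJ, hQBJ]
      _ = (QB * QB⁻¹)ᵀ * J4 * (QB * QB⁻¹) := by
          rw [Matrix.transpose_mul]; simp only [Matrix.mul_assoc]
      _ = J4 := by rw [hinv1]; simp
  · calc (QA * QB⁻¹)ᵀ * A * (QA * QB⁻¹)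
        = QB⁻¹ᵀ * (QAᵀ * A * QA) * QB⁻¹ := by
          rw [Matrix.transpose_mul]; simp only [Matrix.mul_assoc]
      _ = QB⁻¹ᵀ * (QBᵀ * B * QB) * QB⁻¹ := by rw [hQAD, hQBD]
      _ = (QB * QB⁻¹)ᵀ * B * (QB * QB⁻¹) := by
          rw [Matrix.transpose_mul]; simp only [Matrix.mul_assoc]
      _ = B := by rw [hinv1]; simp
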